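/- arXiv:1006.5894 — 5 statements merged into one kernel-verified Lean document; each statement's English description precedes it below -/
import Mathlib

section
/- Let σ ∈ Sym(V) be linearly extendible via an injective map α : V → W = (F₂)^s. Then the extension σ' : W → W, defined by σ'(t) = ∑_j α(σ(v^j)) for t = ∑_j α(v^j) in the span T of α(V), and σ'(w) = σ'(w_T) + w_B for w = w_T + w_B with respect to a direct sum decomposition W = T ⊕ ⟨B⟩, is a well-defined invertible linear map on W. -/
theorem stmt_2 (r s : ℕ) (hs : s > r)
    (σ : Equiv.Perm (Fin r → ZMod 2))
    (α : (Fin r → ZMod 2) → (Fin s → ZMod 2)) (hα : Function.Injective α)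
    (hext : ∀ I : Multiset (Fin r → ZMod 2),
        (I.map α).sum = 0 ↔ (I.map fun v => α (σ v)).sum = 0) :
    ∃ A : (Fin s → ZMod 2) ≃ₗ[ZMod 2] (Fin s → ZMod 2),
      ∀ v, A (α v) = α (σ v) := by
  classical
  have hchar : ∀ x : Fin s → ZMod 2, x + x = 0 := by
    intro x; funext i
    have : ∀ a : ZMod 2, a + a = 0 := by decide
    simpa using this (x i)
  obtain ⟨b, hbS, hbspan, (hbind : LinearIndepOn (ZMod 2) id b)⟩ :=
    exists_linearIndependent (ZMod 2) (Set.range α)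
  have hbC : b ⊆ hbind.extend (Set.subset_univ b) := hbind.subset_extend _
  set basis := Module.Basis.extend hbind with hbasis
  set g : hbind.extend (Set.subset_univ b) → (Fin s → ZMod 2) := fun x =>
    if h : (x : Fin s → ZMod 2) ∈ b then α (σ (Exists.choose (hbS h)))
    else (x : Fin s → ZMod 2) with hg
  set f : (Fin s → ZMod 2) →ₗ[ZMod 2] (Fin s → ZMod 2) :=
    basis.constr (ZMod 2) g with hf
  have hfb : ∀ v, α v ∈ b → f (α v) = α (σ v) := by
    intro v hv
    have hvc : α v ∈ hbind.extend (Set.subset_univ b) := hbC hv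
    have hb' : α v = basis ⟨α v, hvc⟩ := by
      rw [hbasis, Module.Basis.extend_apply_self]
    rw [hb', hf, Module.Basis.constr_basis, hg]
    simp only [dif_pos hv]
    have h1 := Exists.choose_spec (hbS hv)
    exact congrArg (fun u => α (σ u)) (hα h1)
  have key : ∀ v, f (α v) = α (σ v) := by
    intro v
    have hmem : α v ∈ Submodule.span (ZMod 2) b := by
      rw [hbspan]
      exact Submodule.subset_span ⟨v, rfl⟩
    have hrep : ∃ I : Multiset (Fin r → ZMod 2),
        α v = (I.map α).sum ∧ f (α v) = (I.map fun u => α (σ u)).sum := by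
      refine Submodule.span_induction
        (p := fun t _ => ∃ I : Multiset (Fin r → ZMod 2),
          t = (I.map α).sum ∧ f t = (I.map fun u => α (σ u)).sum)
        ?_ ?_ ?_ ?_ hmem
      · intro x hx
        obtain ⟨u, hu⟩ := hbS hx
        refine ⟨{u}, by simp [hu], ?_⟩
        have := hfb u (hu ▸ hx)
        simpa [hu] using this
      · exact ⟨0, by simp, by simp⟩
      · rintro x y _ _ ⟨I, hI1, hI2⟩ ⟨J, hJ1, hJ2⟩
        exact ⟨I + J, by simp [hI1, hJ1], by simp [map_add, hI2, hJ2]⟩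
      · rintro c x _ ⟨I, hI1, hI2⟩
        have hc : c = 0 ∨ c = 1 := by fin_cases c; exacts [Or.inl rfl, Or.inr rfl]
        rcases hc with rfl | rfl
        · exact ⟨0, by simp, by simp⟩
        · exact ⟨I, by simpa using hI1, by simpa using hI2⟩
    obtain ⟨I, hI1, hI2⟩ := hrep
    have hzero : ((v ::ₘ I).map α).sum = 0 := by
      rw [Multiset.map_cons, Multiset.sum_cons, ← hI1]
      exact hchar _
    have hzero2 := (hext (v ::ₘ I)).mp hzero
    rw [Multiset.map_cons, Multiset.sum_cons] at hzero2
    have hsum : (I.map fun u => α (σ u)).sum = α (σ v) := by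
      have h2 := congrArg (fun w => α (σ v) + w) hzero2
      simpa [← add_assoc, hchar (α (σ v))] using h2
    rw [hI2, hsum]
  have hsurj : Function.Surjective f := by
    rw [← LinearMap.range_eq_top, ← top_le_iff, ← basis.span_eq,
      Submodule.span_le]
    rintro x ⟨i, rfl⟩
    have hib : basis i = (i : Fin s → ZMod 2) := by
      rw [hbasis, Module.Basis.extend_apply_self]
    by_cases h : (i : Fin s → ZMod 2) ∈ b
    · obtain ⟨u, hu⟩ := hbS h
      have : f (α (σ.symm u)) = basis i := by
        rw [key, Equiv.apply_symm_apply, hu, hib]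
      exact ⟨α (σ.symm u), this⟩
    · refine ⟨basis i, ?_⟩
      rw [hf, Module.Basis.constr_basis, hg]
      simp only [dif_neg h]
      exact hib.symm
  have hinj : Function.Injective f :=
    (LinearMap.injective_iff_surjective).mpr hsurj
  exact ⟨LinearEquiv.ofBijective f ⟨hinj, hsurj⟩, key⟩
end

section
/- Let ε' : F_{2^m} → (F₂)^{2^m} map field elements bijectively to standard basis vectors, and define ε : (F_{2^m})^b → ((F₂)^{2^m})^b by ε(v_1,…,v_b) = (ε'(v_1),…,ε'(v_b)). Then the F₂-dimension of the linear span of the image of ε equals 2^m·b − (b−1). -/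
theorem stmt_5 (m b : ℕ) (hm : m ≠ 0) (hb : 2 ≤ b) [Fact (Nat.Prime 2)]
    (ε' : GaloisField 2 m → (Fin (2 ^ m) → ZMod 2))
    (hinj : Function.Injective ε')
    (hbasis : ∀ x, ∃ i : Fin (2 ^ m), ε' x = (Pi.single i 1 : Fin (2 ^ m) → ZMod 2)) :
    Module.finrank (ZMod 2)
      (Submodule.span (ZMod 2)
        (Set.range (fun v : Fin b → GaloisField 2 m => fun j => ε' (v j))))
      = 2 ^ m * b - (b - 1) := by
  classical
  obtain ⟨c, rfl⟩ : ∃ c, b = c + 1 := ⟨b - 1, by omega⟩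
  choose ι hι using hbasis
  have hιinj : Function.Injective ι := by
    intro a a' h
    apply hinj
    rw [hι, hι, h]
  have hιsurj : Function.Surjective ι := by
    haveI : Fintype (GaloisField 2 m) := Fintype.ofFinite _
    have hcard : Fintype.card (GaloisField 2 m) = Fintype.card (Fin (2 ^ m)) := by
      rw [Module.card_eq_pow_finrank (K := ZMod 2), GaloisField.finrank 2 hm, ZMod.card,
        Fintype.card_fin]
    exact ((Fintype.bijective_iff_injective_and_card ι).2 ⟨hιinj, hcard⟩).2
  set τ := Function.surjInv hιsurj with hτdef
  have hτι : ∀ i, ι (τ i) = i := Function.surjInv_eq hιsurj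
  have hsum1 : ∀ a : Fin (2 ^ m), (∑ i, (Pi.single a (1 : ZMod 2)) i) = 1 := by
    intro a
    simp [Pi.single_apply]
  set Φ : (Fin (c + 1) → Fin (2 ^ m) → ZMod 2) →ₗ[ZMod 2] (Fin c → ZMod 2) :=
    { toFun := fun x k => (∑ i, x k.succ i) - ∑ i, x 0 i
      map_add' := by
        intro x y; funext k
        simp [Finset.sum_add_distrib]
        ring
      map_smul' := by
        intro r x; funext k
        simp [Finset.mul_sum, mul_sub] } with hΦdef
  have hΦapp : ∀ (x : Fin (c + 1) → Fin (2 ^ m) → ZMod 2) (k : Fin c),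
      Φ x k = (∑ i, x k.succ i) - ∑ i, x 0 i := fun _ _ => rfl
  set S : Set (Fin (c + 1) → Fin (2 ^ m) → ZMod 2) :=
    Set.range (fun v : Fin (c + 1) → GaloisField 2 m => fun j => ε' (v j)) with hSdef
  set i0 : Fin (2 ^ m) := ι 0 with hi0
  have hg0 : (fun _ : Fin (c + 1) => (Pi.single i0 1 : Fin (2 ^ m) → ZMod 2)) ∈ S := by
    refine ⟨fun _ => 0, ?_⟩
    funext j
    show ε' 0 = _
    rw [hι]
  have hgji : ∀ (j : Fin (c + 1)) (i : Fin (2 ^ m)),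
      (fun j' : Fin (c + 1) =>
        (Pi.single (if j' = j then i else i0) 1 : Fin (2 ^ m) → ZMod 2)) ∈ S := by
    intro j i
    refine ⟨fun j' => if j' = j then τ i else 0, ?_⟩
    funext j'
    show ε' _ = _
    by_cases h : j' = j <;> simp [h, hι, hτι, hi0]
  -- key: span S = ker Φ
  have hker : Submodule.span (ZMod 2) S = LinearMap.ker Φ := by
    apply le_antisymm
    · rw [Submodule.span_le]
      rintro _ ⟨v, rfl⟩
      simp only [SetLike.mem_coe, LinearMap.mem_ker]
      funext k
      rw [hΦapp, hι, hι, hsum1, hsum1, sub_self]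
      rfl
    · intro x hx
      rw [LinearMap.mem_ker] at hx
      have hxs : ∀ j, (∑ i, x j i) = ∑ i, x 0 i := by
        intro j
        induction j using Fin.cases with
        | zero => rfl
        | succ k =>
          have := congrFun hx k
          rw [hΦapp] at this
          simpa [sub_eq_zero] using this
      set s : ZMod 2 := ∑ i, x 0 i with hs
      set y : Fin (c + 1) → Fin (2 ^ m) → ZMod 2 :=
        fun j => x j - s • (Pi.single i0 1 : Fin (2 ^ m) → ZMod 2) with hy
      have hyj : ∀ j, (∑ i, y j i) = 0 := by
        intro j
        have hterm : ∀ i, y j i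
            = x j i - s * (Pi.single i0 1 : Fin (2 ^ m) → ZMod 2) i := by
          intro i
          simp [hy]
        rw [Finset.sum_congr rfl fun i _ => hterm i, Finset.sum_sub_distrib,
          ← Finset.mul_sum, hxs j, hsum1, mul_one, sub_self]
      have hdecomp : ∀ z : Fin (2 ^ m) → ZMod 2, (∑ i, z i) = 0 →
          z = ∑ i, z i •
            ((Pi.single i 1 : Fin (2 ^ m) → ZMod 2) - Pi.single i0 1) := by
        intro z hz
        funext k
        rw [Finset.sum_apply]
        have h1 : ∀ i, (z i •
            ((Pi.single i 1 : Fin (2 ^ m) → ZMod 2) - Pi.single i0 1)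
              : Fin (2 ^ m) → ZMod 2) k
            = z i * (if k = i then 1 else 0) - z i * (if k = i0 then 1 else 0) := by
          intro i
          rw [Pi.smul_apply, Pi.sub_apply, Pi.single_apply, Pi.single_apply,
            smul_eq_mul, mul_sub]
        simp only [h1]
        rw [Finset.sum_sub_distrib, ← Finset.sum_mul, hz, zero_mul, sub_zero]
        simp [mul_ite, mul_one, mul_zero, Finset.sum_ite_eq]
      have hymem : ∀ j, Pi.single j (y j) ∈ Submodule.span (ZMod 2) S := by
        intro j
        have h2 : Pi.single j (y j) = ∑ i, y j i •
            ((fun j' : Fin (c + 1) =>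
                (Pi.single (if j' = j then i else i0) 1 : Fin (2 ^ m) → ZMod 2))
              - fun _ : Fin (c + 1) =>
                (Pi.single i0 1 : Fin (2 ^ m) → ZMod 2)) := by
          conv_lhs => rw [hdecomp (y j) (hyj j)]
          rw [← LinearMap.coe_single (R := ZMod 2)
            (φ := fun _ : Fin (c + 1) => Fin (2 ^ m) → ZMod 2) j, map_sum]
          refine Finset.sum_congr rfl fun i _ => ?_
          rw [map_smul]
          congr 1
          funext j' k
          by_cases h : j' = j
          · subst h
            simp [LinearMap.coe_single]
          · simp [LinearMap.coe_single, Pi.single_apply, h]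
        rw [h2]
        exact Submodule.sum_mem _ fun i _ => Submodule.smul_mem _ _
          (Submodule.sub_mem _ (Submodule.subset_span (hgji j i))
            (Submodule.subset_span hg0))
      have hxeq : x = (∑ j, Pi.single j (y j)) +
          s • (fun _ : Fin (c + 1) => (Pi.single i0 1 : Fin (2 ^ m) → ZMod 2)) := by
        rw [Finset.univ_sum_single y]
        funext j k
        show x j k = (x j - s • (Pi.single i0 1 : Fin (2 ^ m) → ZMod 2)) k + s * _
        simp only [Pi.sub_apply, Pi.smul_apply, smul_eq_mul]
        ring
      rw [hxeq]
      exact Submodule.add_mem _ (Submodule.sum_mem _ fun j _ => hymem j)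
        (Submodule.smul_mem _ _ (Submodule.subset_span hg0))
  -- surjectivity of Φ
  have hΦsurj : Function.Surjective Φ := by
    intro yv
    refine ⟨∑ k, yv k • Pi.single (M := fun _ : Fin (c + 1) => Fin (2 ^ m) → ZMod 2)
      k.succ (Pi.single 0 1), ?_⟩
    rw [map_sum]
    funext k'
    rw [Finset.sum_apply]
    have h3 : ∀ k : Fin c,
        Φ (Pi.single (M := fun _ : Fin (c + 1) => Fin (2 ^ m) → ZMod 2) k.succ
          (Pi.single 0 1))
          = (Pi.single k 1 : Fin c → ZMod 2) := by
      intro k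
      funext k''
      rw [hΦapp]
      have hz : (Pi.single (M := fun _ : Fin (c + 1) => Fin (2 ^ m) → ZMod 2) k.succ
          (Pi.single 0 1)) 0 = 0 := by
        rw [Pi.single_apply, if_neg (Fin.succ_ne_zero k).symm]
      have hsucc : (Pi.single (M := fun _ : Fin (c + 1) => Fin (2 ^ m) → ZMod 2) k.succ
          (Pi.single 0 1)) k''.succ
          = if k'' = k then (Pi.single 0 1 : Fin (2 ^ m) → ZMod 2) else 0 := by
        rw [Pi.single_apply]
        by_cases h : k'' = k <;> simp [h, Fin.succ_inj]
      rw [hz, hsucc]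
      by_cases h : k'' = k <;> simp [h, hsum1, Pi.single_apply]
    simp only [map_smul, h3]
    rw [← Finset.sum_apply]
    have h4 : (∑ k, yv k • (Pi.single k 1 : Fin c → ZMod 2)) = yv := by
      funext k
      rw [Finset.sum_apply]
      simp [Pi.single_apply, mul_ite, Finset.sum_ite_eq]
    rw [h4]
  rw [hker]
  have hrank := LinearMap.finrank_range_add_finrank_ker Φ
  rw [LinearMap.range_eq_top.2 hΦsurj, finrank_top] at hrank
  have h1 : Module.finrank (ZMod 2) (Fin (c + 1) → Fin (2 ^ m) → ZMod 2)
      = (c + 1) * 2 ^ m := by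
    rw [Module.finrank_pi_fintype]
    simp [Module.finrank_pi]
  have h2 : Module.finrank (ZMod 2) (Fin c → ZMod 2) = c := by
    simp [Module.finrank_pi]
  rw [Nat.mul_comm] at h1
  rw [h1, h2] at hrank
  omega
end

section
/- Let M ∈ GL((F_{2^m})^b) have order t, and define α(v) = (ε(v), ε(Mv), …, ε(M^{t−1}v)) with ε the parallel basis-vector embedding into (F₂)^{2^m b}. Then dim_{F₂}(span of Im(α)) ≤ 2^m b t − (bt−1) − mb(t−1). -/
set_option maxHeartbeats 2000000 in
theorem stmt_14 (m b t : ℕ) (hm : m ≠ 0) (hb : 2 ≤ b) [Fact (Nat.Prime 2)]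
    (ε' : GaloisField 2 m → (Fin (2 ^ m) → ZMod 2))
    (hinj : Function.Injective ε')
    (hbasis : ∀ x, ∃ i : Fin (2 ^ m), ε' x = (Pi.single i 1 : Fin (2 ^ m) → ZMod 2))
    (M : (Fin b → GaloisField 2 m) ≃ₗ[GaloisField 2 m] (Fin b → GaloisField 2 m))
    (ht : orderOf M = t) (ht0 : 0 < t)
    (α : (Fin b → GaloisField 2 m) → (Fin t → Fin b → Fin (2 ^ m) → ZMod 2))
    (hα : ∀ v j i, α v j i = ε' (((M ^ (j : ℕ)) v) i)) :
    Module.finrank (ZMod 2) (Submodule.span (ZMod 2) (Set.range α))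
      ≤ 2 ^ m * b * t - (b * t - 1) - m * b * (t - 1) := by
  classical
  haveI : NeZero t := ⟨ht0.ne'⟩
  haveI : NeZero b := ⟨by omega⟩
  haveI : Fintype (GaloisField 2 m) := Fintype.ofFinite _
  have hcard : Fintype.card (GaloisField 2 m) = 2 ^ m := by
    rw [← Nat.card_eq_fintype_card]; exact GaloisField.card 2 m hm
  -- the bijection σ
  have hσ0 : ∀ x, ε' x = Pi.single ((hbasis x).choose) 1 := fun x => (hbasis x).choose_spec
  have hσinj : Function.Injective (fun x => (hbasis x).choose) := by
    intro x y h
    have h' : (hbasis x).choose = (hbasis y).choose := h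
    apply hinj
    rw [hσ0 x, hσ0 y, h']
  have hσbij : Function.Bijective (fun x => (hbasis x).choose) := by
    rw [Fintype.bijective_iff_injective_and_card]
    exact ⟨hσinj, by simp [hcard]⟩
  let σ : GaloisField 2 m ≃ Fin (2 ^ m) := Equiv.ofBijective _ hσbij
  have hσ : ∀ x, ε' x = Pi.single (σ x) 1 := hσ0
  -- the basis of K over F2
  have hfr : Module.finrank (ZMod 2) (GaloisField 2 m) = m := GaloisField.finrank 2 hm
  let B : Module.Basis (Fin m) (ZMod 2) (GaloisField 2 m) :=
    (Module.finBasis (ZMod 2) (GaloisField 2 m)).reindex (finCongr hfr)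
  have hB : ∀ k k' : Fin m, B.coord k (B k') = if k' = k then 1 else 0 := by
    intro k k'
    rw [Module.Basis.coord_apply, Module.Basis.repr_self, Finsupp.single_apply]
  have haa : ∀ a : ZMod 2, a + a = 0 := fun a => CharTwo.add_self_eq_zero a
  have honeone : (1 : ZMod 2) + 1 = 0 := haa 1
  -- helper sums
  have hsum1 : ∀ c : Fin (2 ^ m), ∑ x, (Pi.single c (1:ZMod 2) : Fin (2 ^ m) → ZMod 2) x = 1 := by
    intro c; simp [Pi.single_apply]
  have hsum2 : ∀ (g : Fin (2 ^ m) → ZMod 2) (c : Fin (2 ^ m)),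
      ∑ x, g x * (Pi.single c (1:ZMod 2) : Fin (2 ^ m) → ZMod 2) x = g c := by
    intro g c; simp [Pi.single_apply, mul_ite]
  -- matrix expansion
  have hexp : ∀ (j : ℕ) (v : Fin b → GaloisField 2 m) (i : Fin b),
      (M ^ j) v i = ∑ i', (M ^ j) (Pi.single i' 1 : Fin b → GaloisField 2 m) i * v i' := by
    intro j v i
    have h1 : v = ∑ i', v i' • (Pi.single i' 1 : Fin b → GaloisField 2 m) := by
      ext r; simp [Pi.single_apply, Finset.sum_apply]
    conv_lhs => rw [h1]
    rw [map_sum]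
    simp [Finset.sum_apply, mul_comm]
  -- the linear maps
  let A : Fin t → Fin b → Fin b → GaloisField 2 m := fun j i i' =>
    (M ^ (j:ℕ)) (Pi.single i' 1 : Fin b → GaloisField 2 m) i
  let L1 : (Fin t → Fin b → Fin (2 ^ m) → ZMod 2) →ₗ[ZMod 2]
      ({p : Fin t × Fin b // p ≠ (0, 0)} → ZMod 2) :=
    { toFun := fun f p => (∑ x, f p.1.1 p.1.2 x) + ∑ x, f 0 0 x
      map_add' := by
        intro f g; funext p
        simp [Finset.sum_add_distrib]
        ring
      map_smul' := by
        intro c f; funext p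
        simp [Finset.mul_sum, mul_add] }
  let L2 : (Fin t → Fin b → Fin (2 ^ m) → ZMod 2) →ₗ[ZMod 2]
      (({j : Fin t // j ≠ 0} × Fin b × Fin m) → ZMod 2) :=
    { toFun := fun f q => (∑ x, B.coord q.2.2 (σ.symm x) * f q.1.1 q.2.1 x)
        + ∑ i', ∑ x, B.coord q.2.2 (A q.1.1 q.2.1 i' * σ.symm x) * f 0 i' x
      map_add' := by
        intro f g; funext q
        simp [mul_add, Finset.sum_add_distrib]
        ring
      map_smul' := by
        intro c f; funext q
        simp [Finset.mul_sum, mul_add, mul_comm, mul_left_comm, mul_assoc] }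
  let L := L1.prod L2
  -- the span is in the kernel
  have hker : Submodule.span (ZMod 2) (Set.range α) ≤ LinearMap.ker L := by
    rw [Submodule.span_le]
    rintro _ ⟨v, rfl⟩
    simp only [SetLike.mem_coe, LinearMap.mem_ker]
    refine Prod.ext ?_ ?_
    · funext p
      show (∑ x, α v p.1.1 p.1.2 x) + ∑ x, α v 0 0 x = 0
      have e1 : ∀ (j : Fin t) (i : Fin b), ∑ x, α v j i x = 1 := by
        intro j i
        simp only [hα, hσ]
        exact hsum1 _
      rw [e1, e1]
      exact honeone
    · funext q
      obtain ⟨⟨j, hj⟩, i, k⟩ := q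
      show (∑ x, B.coord k (σ.symm x) * α v j i x)
          + ∑ i', ∑ x, B.coord k (A j i i' * σ.symm x) * α v 0 i' x = 0
      have e1 : ∑ x, B.coord k (σ.symm x) * α v j i x = B.coord k ((M ^ (j:ℕ)) v i) := by
        simp only [hα, hσ]
        rw [hsum2 (fun x => B.coord k (σ.symm x))]
        simp
      have e2 : ∀ i', ∑ x, B.coord k (A j i i' * σ.symm x) * α v 0 i' x
          = B.coord k (A j i i' * v i') := by
        intro i'
        simp only [hα, hσ]
        rw [hsum2 (fun x => B.coord k (A j i i' * σ.symm x))]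
        simp
      rw [e1]
      rw [Finset.sum_congr rfl (fun i' _ => e2 i')]
      rw [← map_sum]
      simp only [A]
      rw [← hexp]
      exact haa _
  -- surjectivity
  have hsurj : Function.Surjective L := by
    rintro ⟨u, w⟩
    let U : Fin t → Fin b → ZMod 2 := fun j i =>
      if h : (j, i) = ((0 : Fin t), (0 : Fin b)) then 0 else u ⟨(j, i), h⟩
    let Wf : Fin t → Fin b → Fin m → ZMod 2 := fun j i k =>
      if h : j = 0 then 0 else w (⟨j, h⟩, i, k)
    have hWf0 : ∀ i k, Wf 0 i k = 0 := by intro i k; simp [Wf]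
    refine ⟨fun j i x => U j i * (Pi.single (σ 0) 1 : Fin (2 ^ m) → ZMod 2) x
      + ∑ k, Wf j i k * ((Pi.single (σ (B k)) 1 : Fin (2 ^ m) → ZMod 2) x
          + (Pi.single (σ 0) 1 : Fin (2 ^ m) → ZMod 2) x), ?_⟩
    have hsum3 : ∀ (j : Fin t) (i : Fin b),
        (∑ x, (U j i * (Pi.single (σ 0) 1 : Fin (2 ^ m) → ZMod 2) x
        + ∑ k, Wf j i k * ((Pi.single (σ (B k)) 1 : Fin (2 ^ m) → ZMod 2) x
          + (Pi.single (σ 0) 1 : Fin (2 ^ m) → ZMod 2) x))) = U j i := by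
      intro j i
      rw [Finset.sum_add_distrib]
      have ha : ∑ x, U j i * (Pi.single (σ 0) 1 : Fin (2 ^ m) → ZMod 2) x = U j i := by
        rw [← Finset.mul_sum, hsum1, mul_one]
      have hbb : (∑ x, ∑ k, Wf j i k * ((Pi.single (σ (B k)) 1 : Fin (2 ^ m) → ZMod 2) x
          + (Pi.single (σ 0) 1 : Fin (2 ^ m) → ZMod 2) x)) = 0 := by
        rw [Finset.sum_comm (s := (Finset.univ : Finset (Fin (2 ^ m))))
          (t := (Finset.univ : Finset (Fin m)))]
        apply Finset.sum_eq_zero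
        intro k _
        rw [← Finset.mul_sum, Finset.sum_add_distrib, hsum1, hsum1, honeone, mul_zero]
      rw [ha, hbb, add_zero]
    have hsum4 : ∀ (g : Fin (2 ^ m) → ZMod 2) (j : Fin t) (i : Fin b),
        (∑ x, g x * (U j i * (Pi.single (σ 0) 1 : Fin (2 ^ m) → ZMod 2) x
        + ∑ k, Wf j i k * ((Pi.single (σ (B k)) 1 : Fin (2 ^ m) → ZMod 2) x
          + (Pi.single (σ 0) 1 : Fin (2 ^ m) → ZMod 2) x)))
        = U j i * g (σ 0) + ∑ k, Wf j i k * (g (σ (B k)) + g (σ 0)) := by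
      intro g j i
      have e0 : ∀ (c : Fin (2 ^ m)) (a : ZMod 2),
          ∑ x, g x * (a * (Pi.single c (1:ZMod 2) : Fin (2 ^ m) → ZMod 2) x) = a * g c := by
        intro c a
        rw [← hsum2 g c, Finset.mul_sum]
        congr 1; funext x; ring
      have expand : ∀ x, g x * (U j i * (Pi.single (σ 0) 1 : Fin (2 ^ m) → ZMod 2) x
          + ∑ k, Wf j i k * ((Pi.single (σ (B k)) 1 : Fin (2 ^ m) → ZMod 2) x
            + (Pi.single (σ 0) 1 : Fin (2 ^ m) → ZMod 2) x))
          = g x * (U j i * (Pi.single (σ 0) 1 : Fin (2 ^ m) → ZMod 2) x)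
            + ∑ k, (g x * (Wf j i k * (Pi.single (σ (B k)) 1 : Fin (2 ^ m) → ZMod 2) x)
              + g x * (Wf j i k * (Pi.single (σ 0) 1 : Fin (2 ^ m) → ZMod 2) x)) := by
        intro x
        rw [mul_add, Finset.mul_sum]
        congr 1
        apply Finset.sum_congr rfl
        intro k _
        ring
      rw [Finset.sum_congr rfl (fun x _ => expand x), Finset.sum_add_distrib,
        Finset.sum_comm (s := (Finset.univ : Finset (Fin (2 ^ m))))
          (t := (Finset.univ : Finset (Fin m)))]
      congr 1
      · exact e0 _ _
      · apply Finset.sum_congr rfl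
        intro k _
        rw [Finset.sum_add_distrib, e0, e0, mul_add]
    refine Prod.ext ?_ ?_
    · funext p
      obtain ⟨⟨j, i⟩, hp⟩ := p
      show (∑ x, _) + (∑ x, _) = u _
      rw [hsum3, hsum3]
      simp only [U]
      rw [dif_neg hp]
      simp
    · funext q
      obtain ⟨⟨j, hj⟩, i, k⟩ := q
      show (∑ x, B.coord k (σ.symm x) * _) + ∑ i', ∑ x, B.coord k (A j i i' * σ.symm x) * _
          = w _
      rw [hsum4 (fun x => B.coord k (σ.symm x))]
      have e5 : ∀ i' : Fin b, (∑ x, B.coord k (A j i i' * σ.symm x)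
          * (U 0 i' * (Pi.single (σ 0) 1 : Fin (2 ^ m) → ZMod 2) x
        + ∑ k', Wf 0 i' k' * ((Pi.single (σ (B k')) 1 : Fin (2 ^ m) → ZMod 2) x
          + (Pi.single (σ 0) 1 : Fin (2 ^ m) → ZMod 2) x))) = 0 := by
        intro i'
        rw [hsum4 (fun x => B.coord k (A j i i' * σ.symm x))]
        simp [hWf0]
      rw [Finset.sum_congr rfl (fun i' _ => e5 i')]
      simp only [Equiv.symm_apply_apply, map_zero, mul_zero, add_zero]
      have e6 : ∑ k' : Fin m, Wf j i k' * (B.coord k) (B k') = Wf j i k := by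
        have e7 : ∀ k' : Fin m, Wf j i k' * (B.coord k) (B k')
            = if k' = k then Wf j i k' else 0 := by
          intro k'
          rw [hB]
          split <;> simp
        rw [Finset.sum_congr rfl (fun k' _ => e7 k')]
        simp
      rw [e6]
      simp [Wf, hj]
  -- dimension count
  have h1 := LinearMap.finrank_range_add_finrank_ker L
  rw [LinearMap.range_eq_top.mpr hsurj, finrank_top] at h1
  have hWdim : Module.finrank (ZMod 2)
      (({p : Fin t × Fin b // p ≠ (0, 0)} → ZMod 2) × (({j : Fin t // j ≠ 0} × Fin b × Fin m) → ZMod 2))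
      = (t * b - 1) + (t - 1) * (b * m) := by
    rw [Module.finrank_prod, Module.finrank_pi, Module.finrank_pi]
    congr 1
    · rw [Fintype.card_subtype_compl, Fintype.card_subtype_eq]
      simp [Nat.mul_comm]
    · simp [Fintype.card_subtype_compl, Fintype.card_subtype_eq, mul_assoc]
  have hVdim : Module.finrank (ZMod 2) (Fin t → Fin b → Fin (2 ^ m) → ZMod 2)
      = t * (b * 2 ^ m) := by
    simp [Module.finrank_pi_fintype, Module.finrank_pi, Finset.sum_const]
  rw [hWdim, hVdim] at h1
  have hle := Submodule.finrank_mono hker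
  have goal1 : Module.finrank (ZMod 2) (Submodule.span (ZMod 2) (Set.range α))
      ≤ t * (b * 2 ^ m) - ((t * b - 1) + (t - 1) * (b * m)) := by omega
  calc Module.finrank (ZMod 2) (Submodule.span (ZMod 2) (Set.range α))
      ≤ t * (b * 2 ^ m) - ((t * b - 1) + (t - 1) * (b * m)) := goal1
    _ = 2 ^ m * b * t - (b * t - 1) - m * b * (t - 1) := by
        rw [Nat.sub_sub]
        congr 1
        · ring
        · congr 1
          · congr 1
            ring
          · obtain ⟨s, rfl⟩ : ∃ s, t = s + 1 := ⟨t - 1, by omega⟩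
            simp
            ring
end

section
/- Let M ∈ GL((F_{2^m})^b), t its order, and α(v) = (ε(v), ε(Mv), …, ε(M^{t−1}v)). Any map σ(v) = (a·v_1 + c, …, a·v_b + c), with a ∈ F_{2^m} nonzero and c ∈ F_{2^m}, is linearly extendible via α: ∑ α(v^i) = 0 implies ∑ α(σ(v^i)) = 0 for every finite family {v^i}. -/
lemma msum_apply {ι β : Type*} [AddCommMonoid β] (s : Multiset (ι → β)) (x : ι) :
    s.sum x = (s.map fun f => f x).sum := by
  induction s using Multiset.induction with
  | empty => simp
  | cons a s ih => simp [ih]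

theorem stmt_16 (m b t : ℕ) (hm : m ≠ 0) (hb : 2 ≤ b) [Fact (Nat.Prime 2)]
    (ε' : GaloisField 2 m → (Fin (2 ^ m) → ZMod 2))
    (hinj : Function.Injective ε')
    (hbasis : ∀ x, ∃ i : Fin (2 ^ m), ε' x = (Pi.single i 1 : Fin (2 ^ m) → ZMod 2))
    (M : (Fin b → GaloisField 2 m) ≃ₗ[GaloisField 2 m] (Fin b → GaloisField 2 m))
    (ht : orderOf M = t) (ht0 : 0 < t)
    (α : (Fin b → GaloisField 2 m) → (Fin t → Fin b → Fin (2 ^ m) → ZMod 2))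
    (hα : ∀ v j i, α v j i = ε' (((M ^ (j : ℕ)) v) i))
    (a c : GaloisField 2 m) (ha : a ≠ 0)
    (I : Multiset (Fin b → GaloisField 2 m))
    (hsum : (I.map α).sum = 0) :
    (I.map fun v => α (fun j => a * v j + c)).sum = 0 := by
  classical
  choose idx hidx using hbasis
  have hεval : ∀ x k, ε' x k = if idx x = k then 1 else 0 := by
    intro x k; rw [hidx x, Pi.single_apply]; simp [eq_comm]
  have hidx_inj : Function.Injective idx := by
    intro x y h
    apply hinj; rw [hidx x, hidx y, h]
  haveI : Fintype (GaloisField 2 m) := Fintype.ofFinite _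
  have hcard : Fintype.card (GaloisField 2 m) = 2 ^ m := by
    rw [← Nat.card_eq_fintype_card]; exact GaloisField.card 2 m hm
  have hidx_bij : Function.Bijective idx :=
    (Fintype.bijective_iff_injective_and_card idx).2
      ⟨hidx_inj, by simp [hcard]⟩
  let σidx : GaloisField 2 m ≃ Fin (2 ^ m) := Equiv.ofBijective idx hidx_bij
  funext j i k
  set d : GaloisField 2 m := ((M ^ (j : ℕ)) (fun _ => c)) i with hd
  -- affine bijection
  have hg : Function.Bijective (fun x : GaloisField 2 m => a * x + d) := by
    constructor
    · intro x y h
      simp only [add_left_inj] at h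
      exact mul_left_cancel₀ ha h
    · intro y
      exact ⟨a⁻¹ * (y - d), by simp only [mul_inv_cancel_left₀ ha, sub_add_cancel]⟩
  let g : GaloisField 2 m ≃ GaloisField 2 m := Equiv.ofBijective _ hg
  -- key pointwise identity
  have hkey : ∀ v : Fin b → GaloisField 2 m,
      α (fun j' => a * v j' + c) j i k
        = ε' (((M ^ (j : ℕ)) v) i) (idx (g.symm (σidx.symm k))) := by
    intro v
    have hvec : (fun j' => a * v j' + c) = a • v + (fun _ => c) := by
      funext j'; simp [Pi.smul_apply, Pi.add_apply, smul_eq_mul]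
    rw [hα, hvec, map_add, map_smul]
    have h1 : ((a • (M ^ (j : ℕ)) v + (M ^ (j : ℕ)) fun _ => c) i)
        = a * ((M ^ (j : ℕ)) v) i + d := by
      simp [hd, Pi.add_apply, Pi.smul_apply, smul_eq_mul]
    rw [h1, hεval, hεval]
    apply if_congr _ rfl rfl
    constructor <;> intro h
    · -- idx (a*y+d) = k  →  idx y = idx (g.symm (σidx.symm k))
      have : a * ((M ^ (j : ℕ)) v) i + d = σidx.symm k := by
        exact (Equiv.apply_eq_iff_eq_symm_apply σidx).1 h
      have : g (((M ^ (j : ℕ)) v) i) = σidx.symm k := this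
      have := congrArg g.symm this
      rw [g.symm_apply_apply] at this
      rw [this]
    · have hy : ((M ^ (j : ℕ)) v) i = g.symm (σidx.symm k) := hidx_inj h
      have : g (((M ^ (j : ℕ)) v) i) = σidx.symm k := by
        rw [hy, g.apply_symm_apply]
      have : a * ((M ^ (j : ℕ)) v) i + d = σidx.symm k := this
      rw [this]
      exact σidx.apply_symm_apply k
  -- evaluate hsum at j i k'
  set k' := idx (g.symm (σidx.symm k)) with hk'
  have hs := congrFun (congrFun (congrFun hsum j) i) k'
  rw [msum_apply, Multiset.map_map] at hs
  simp only [Function.comp] at hs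
  have hs2 : (I.map fun v => α v j i k').sum = 0 := by
    have := hs
    rw [msum_apply, Multiset.map_map] at this
    simp only [Function.comp] at this
    rw [msum_apply, Multiset.map_map] at this
    simp only [Function.comp] at this
    simpa using this
  rw [msum_apply, Multiset.map_map]
  simp only [Function.comp] at hs2 ⊢
  rw [msum_apply, Multiset.map_map]
  simp only [Function.comp]
  rw [msum_apply, Multiset.map_map]
  simp only [Function.comp]
  calc (I.map fun v => α (fun j' => a * v j' + c) j i k).sum
      = (I.map fun v => ε' (((M ^ (j : ℕ)) v) i) k').sum := by
        congr 1; exact Multiset.map_congr rfl (fun v _ => hkey v)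
    _ = (I.map fun v => α v j i k').sum := by
        congr 1; exact Multiset.map_congr rfl (fun v _ => (hα v j i).symm ▸ rfl)
    _ = 0 := hs2
end

section
/- Let σ ∈ GL((F₂)^N) with N ≥ 4 and suppose the order of σ is even. Then the order of σ is at most 2(2^{N−2} − 1) = 2^{N−1} − 2. -/
open Polynomial

private lemma two_mul_le_two_pow' {A : ℕ} (hA : 1 ≤ A) : 2 * A ≤ 2 ^ A := by
  induction A with
  | zero => omega
  | succ k ih =>
    rcases Nat.eq_zero_or_pos k with rfl | hk
    · norm_num
    · have h1 := ih hk
      have h2 : 2 ≤ 2 ^ k := by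
        calc 2 = 2 * 1 := by norm_num
        _ ≤ 2 * k := by omega
        _ ≤ 2 ^ k := h1
      have : 2 ^ (k+1) = 2 ^ k + 2 ^ k := by rw [pow_succ]; ring
      omega

private lemma mul_pred_le' (x y : ℕ) : (2 ^ x - 1) * (2 ^ y - 1) ≤ 2 ^ (x + y) - 1 := by
  rcases Nat.exists_eq_add_of_le (Nat.one_le_two_pow (n := x)) with ⟨a, ha⟩
  rcases Nat.exists_eq_add_of_le (Nat.one_le_two_pow (n := y)) with ⟨b, hb⟩
  have hxy : 2 ^ (x + y) = (1 + a) * (1 + b) := by rw [pow_add, ha, hb]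
  have hexp : (1 + a) * (1 + b) = a * b + a + b + 1 := by ring
  have h1 : 2 ^ x - 1 = a := by omega
  have h2 : 2 ^ y - 1 = b := by omega
  rw [h1, h2, hxy, hexp]
  omega

private lemma my_le_pow_sub_two {N : ℕ} (hN : 4 ≤ N) : N ≤ 2 ^ (N - 2) := by
  induction N, hN using Nat.le_induction with
  | base => norm_num
  | succ k hk ih =>
    have h2 : k + 1 - 2 = (k - 2) + 1 := by omega
    rw [h2, pow_succ]
    omega

private lemma arith1' {A D N m : ℕ} (hA : 1 ≤ A) (hN4 : 4 ≤ N) (hAD : A + 1 + D ≤ N)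
    (hm : m ≤ max 1 (2 ^ D - 1)) : 2 * A * m ≤ 2 ^ (N - 1) - 2 := by
  have hpow : 2 ^ (N - 1) = 2 * 2 ^ (N - 2) := by
    rw [← pow_succ']; congr 1; omega
  rcases Nat.eq_zero_or_pos D with rfl | hD
  · simp only [pow_zero] at hm
    have hm1 : m ≤ 1 := by simpa using hm
    have h2 := my_le_pow_sub_two hN4
    have h3 : 2 * A * m ≤ 2 * A := by nlinarith
    omega
  · have hmax : max 1 (2 ^ D - 1) = 2 ^ D - 1 := by
      have : 2 ≤ 2 ^ D := by calc 2 = 2^1 := by norm_num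
                                 _ ≤ 2 ^ D := Nat.pow_le_pow_right (by norm_num) hD
      omega
    rw [hmax] at hm
    have key : 2 * A * 2 ^ D ≤ 2 ^ (N - 1) := by
      calc 2 * A * 2 ^ D ≤ 2 ^ A * 2 ^ D := Nat.mul_le_mul_right _ (two_mul_le_two_pow' hA)
        _ = 2 ^ (A + D) := (pow_add 2 A D).symm
        _ ≤ 2 ^ (N - 1) := Nat.pow_le_pow_right (by norm_num) (by omega)
    have h1 : 2 * A * m ≤ 2 * A * (2 ^ D - 1) := Nat.mul_le_mul_left _ hm
    have h2 : 2 * A * (2 ^ D - 1) = 2 * A * 2 ^ D - 2 * A := by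
      rw [Nat.mul_sub, mul_one]
    omega

private lemma arith2' {A dp D N m : ℕ} (hA : 1 ≤ A) (hdp : 2 ≤ dp) (hND : (A + 1) * dp + D ≤ N)
    (hm : m ≤ 2 ^ (dp + D) - 1) : 2 * A * m ≤ 2 ^ (N - 1) - 2 := by
  have hexp : (A + 1) * dp = A * dp + dp := by ring
  have hAdp : 2 * A ≤ A * dp := by nlinarith
  have hsum : dp + D + 2 * A ≤ N := by omega
  have h2A : 2 * A ≤ 2 ^ (2 * A - 1) := by
    have h1 := two_mul_le_two_pow' (A := 2 * A - 1) (by omega)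
    have h2 : 2 * A ≤ 2 * (2 * A - 1) := by omega
    omega
  have key : 2 * A * 2 ^ (dp + D) ≤ 2 ^ (N - 1) := by
    calc 2 * A * 2 ^ (dp + D) ≤ 2 ^ (2 * A - 1) * 2 ^ (dp + D) := Nat.mul_le_mul_right _ h2A
      _ = 2 ^ (2 * A - 1 + (dp + D)) := (pow_add _ _ _).symm
      _ ≤ 2 ^ (N - 1) := Nat.pow_le_pow_right (by norm_num) (by omega)
  have h1 : 2 * A * m ≤ 2 * A * (2 ^ (dp + D) - 1) := Nat.mul_le_mul_left _ hm
  have h2 : 2 * A * (2 ^ (dp + D) - 1) = 2 * A * 2 ^ (dp + D) - 2 * A := by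
    rw [Nat.mul_sub, mul_one]
  omega


private lemma my_isUnit_of_deg0 {f : Polynomial (ZMod 2)} (hf : f ≠ 0) (h : f.natDegree = 0) :
    IsUnit f := by
  have := Polynomial.eq_C_of_natDegree_eq_zero h
  rw [this]
  refine Polynomial.isUnit_C.mpr (isUnit_iff_ne_zero.mpr ?_)
  intro h0
  apply hf
  rw [this, h0, map_zero]

private lemma my_natDegree_pos_of_prime {q : Polynomial (ZMod 2)} (hq : Prime q) :
    0 < q.natDegree := by
  rcases Nat.eq_zero_or_pos q.natDegree with h | h
  · exact absurd (my_isUnit_of_deg0 hq.ne_zero h) hq.not_unit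
  · exact h

private lemma my_prime_dvd_prime {p q : Polynomial (ZMod 2)} (hp : Prime p) (hq : Prime q)
    (h : q ∣ p) : p ∣ q := by
  rcases h with ⟨u, hu⟩
  rcases hp.irreducible.isUnit_or_isUnit hu with h1 | h1
  · exact absurd h1 hq.not_unit
  · rcases h1.exists_right_inv with ⟨v, hv⟩
    exact ⟨v, by rw [hu, mul_assoc, hv, mul_one]⟩

/-- An irreducible polynomial over `F₂` not divisible by `X` divides `X^(2^d - 1) - 1`. -/
private lemma prime_dvd_X_pow_sub_one {p : Polynomial (ZMod 2)} (hp : Prime p)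
    (hX : ¬ (X : Polynomial (ZMod 2)) ∣ p) :
    p ∣ X ^ (2 ^ p.natDegree - 1) - 1 := by
  have hp0 : p ≠ 0 := hp.ne_zero
  have hirr : Irreducible p := hp.irreducible
  haveI : Fact (Irreducible p) := ⟨hirr⟩
  haveI : FiniteDimensional (ZMod 2) (AdjoinRoot p) :=
    Module.Finite.of_basis (AdjoinRoot.powerBasis hp0).basis
  haveI : Finite (AdjoinRoot p) := Module.finite_of_finite (ZMod 2)
  haveI : Fintype (AdjoinRoot p) := Fintype.ofFinite _
  have hcard : Fintype.card (AdjoinRoot p) = 2 ^ p.natDegree := by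
    rw [Module.card_eq_pow_finrank (K := ZMod 2), ZMod.card]
    congr 1
    have := (AdjoinRoot.powerBasis hp0).finrank
    simpa [AdjoinRoot.powerBasis] using this
  have hroot : (AdjoinRoot.root p) ≠ 0 := by
    intro h
    have hpX : p ∣ X := AdjoinRoot.mk_eq_zero.mp (by rwa [AdjoinRoot.mk_X])
    exact hX (my_prime_dvd_prime Polynomial.prime_X hp hpX)
  have hpow : (AdjoinRoot.root p) ^ (2 ^ p.natDegree - 1) = 1 := by
    rw [← hcard]
    exact FiniteField.pow_card_sub_one_eq_one _ hroot
  have hmk : (AdjoinRoot.mk p) (X ^ (2 ^ p.natDegree - 1) - 1) = 0 := by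
    rw [map_sub, map_pow, AdjoinRoot.mk_X, map_one, hpow, sub_self]
  exact AdjoinRoot.mk_eq_zero.mp hmk

/-- If every prime factor of `f` divides `s`, then `f ∣ s ^ k` for `k ≥ deg f`. -/
private lemma my_dvd_pow_of_prime_dvd (s : Polynomial (ZMod 2)) :
    ∀ (k : ℕ) (f : Polynomial (ZMod 2)), f ≠ 0 → f.natDegree ≤ k →
      (∀ q, Prime q → q ∣ f → q ∣ s) → f ∣ s ^ k := by
  intro k
  induction k with
  | zero =>
    intro f hf hdeg _
    simpa using (my_isUnit_of_deg0 hf (by omega)).dvd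
  | succ k ih =>
    intro f hf hdeg hq
    by_cases hu : IsUnit f
    · exact hu.dvd
    · obtain ⟨q, hqi, g, rfl⟩ := WfDvdMonoid.exists_irreducible_factor hu hf
      have hq' : Prime q := (UniqueFactorizationMonoid.irreducible_iff_prime).mp hqi
      have hg : g ≠ 0 := by rintro rfl; simp at hf
      have hq0 : q ≠ 0 := hq'.ne_zero
      have hdq : 1 ≤ q.natDegree := my_natDegree_pos_of_prime hq'
      have hmul := Polynomial.natDegree_mul hq0 hg
      have hdeg' : g.natDegree ≤ k := by omega
      have hsub : ∀ r, Prime r → r ∣ g → r ∣ s := fun r hr hrd =>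
        hq r hr (hrd.mul_left q)
      have h1 : q ∣ s := hq q hq' ⟨g, rfl⟩
      calc q * g ∣ s * s ^ k := mul_dvd_mul h1 (ih g hg hdeg' hsub)
        _ = s ^ (k + 1) := by rw [pow_succ]; ring

/-- If `s` is squarefree, all prime factors of `f` divide `s`, and no prime power
`q^(A+1)` divides `f`, then `f ∣ s ^ A`. -/
private lemma my_dvd_pow_of_squarefree (A : ℕ) :
    ∀ (n : ℕ) (f s : Polynomial (ZMod 2)), f ≠ 0 → f.natDegree ≤ n → Squarefree s →
      (∀ q, Prime q → q ∣ f → q ∣ s) →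
      (∀ q, Prime q → ¬ q ^ (A + 1) ∣ f) → f ∣ s ^ A := by
  intro n
  induction n with
  | zero =>
    intro f s hf hdeg _ _ _
    exact (my_isUnit_of_deg0 hf (by omega)).dvd
  | succ n ih =>
    intro f s hf hdeg hsq hqs hqA
    by_cases hu : IsUnit f
    · exact hu.dvd
    classical
    obtain ⟨p, hpi, hpd⟩ := WfDvdMonoid.exists_irreducible_factor hu hf
    have hp : Prime p := (UniqueFactorizationMonoid.irreducible_iff_prime).mp hpi
    have hdp : 1 ≤ p.natDegree := my_natDegree_pos_of_prime hp
    have hdegf : 1 ≤ f.natDegree := by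
      rcases Nat.eq_zero_or_pos f.natDegree with h | h
      · exact absurd (my_isUnit_of_deg0 hf h) hu
      · exact h
    set c := Nat.findGreatest (fun c => p ^ c ∣ f) f.natDegree with hc_def
    have hc1 : 1 ≤ c := Nat.le_findGreatest (P := fun c => p ^ c ∣ f) hdegf (by simpa using hpd)
    have hc_spec : p ^ c ∣ f :=
      Nat.findGreatest_spec (P := fun c => p ^ c ∣ f) (m := 1) hdegf (by simpa using hpd)
    have hc_max : ¬ p ^ (c + 1) ∣ f := by
      intro hdvd
      have h1 : (c + 1) * p.natDegree ≤ f.natDegree := by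
        have := Polynomial.natDegree_le_of_dvd hdvd hf
        rwa [Polynomial.natDegree_pow] at this
      have h2 : c + 1 ≤ f.natDegree := by nlinarith
      exact Nat.findGreatest_is_greatest (P := fun c => p ^ c ∣ f) (lt_add_one c) h2 hdvd
    have hcA : c ≤ A := by
      by_contra h
      exact hqA p hp ((pow_dvd_pow p (by omega)).trans hc_spec)
    obtain ⟨h, hfh⟩ := hc_spec
    have hh0 : h ≠ 0 := by rintro rfl; rw [mul_zero] at hfh; exact hf hfh
    have hph : ¬ p ∣ h := by
      rintro ⟨h', rfl⟩
      exact hc_max ⟨h', by rw [hfh, pow_succ]; ring⟩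
    have hpf : p ∣ f := (dvd_pow_self p (by omega : c ≠ 0)).trans ⟨h, hfh⟩
    obtain ⟨s', rfl⟩ := hqs p hp hpf
    have hsq' : Squarefree s' := hsq.squarefree_of_dvd (Dvd.intro_left p rfl)
    have hps' : ¬ p ∣ s' := fun hd => hp.not_unit (hsq p (mul_dvd_mul dvd_rfl hd))
    have hdegh : h.natDegree ≤ n := by
      have := Polynomial.natDegree_mul (pow_ne_zero c hp.ne_zero) hh0
      rw [← hfh, Polynomial.natDegree_pow] at this
      nlinarith
    have hqs' : ∀ q, Prime q → q ∣ h → q ∣ s' := by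
      intro q hq hqh
      have hqf : q ∣ f := hqh.trans (Dvd.intro_left _ hfh.symm)
      rcases hq.2.2 p s' (hqs q hq hqf) with h1 | h1
      · exact absurd ((my_prime_dvd_prime hp hq h1).trans hqh) hph
      · exact h1
    have hqA' : ∀ q, Prime q → ¬ q ^ (A + 1) ∣ h := fun q hq hd =>
      hqA q hq (hd.trans (Dvd.intro_left _ hfh.symm))
    have ihh : h ∣ s' ^ A := ih h s' hh0 hdegh hsq' hqs' hqA'
    rw [hfh, mul_pow]
    exact mul_dvd_mul (pow_dvd_pow p hcA) ihh

/-- For `g` over `F₂` with no factor `X`, there is an odd `t ≤ max 1 (2^deg g - 1)`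
such that every prime factor of `g` divides `X^t - 1`. -/
private lemma exists_odd_exponent :
    ∀ (n : ℕ) (g : Polynomial (ZMod 2)), g ≠ 0 → g.natDegree ≤ n →
      ¬ (X : Polynomial (ZMod 2)) ∣ g →
      ∃ t : ℕ, Odd t ∧ t ≤ max 1 (2 ^ g.natDegree - 1) ∧
        ∀ q, Prime q → q ∣ g → q ∣ X ^ t - 1 := by
  intro n
  induction n with
  | zero =>
    intro g hg hdeg _
    exact ⟨1, odd_one, le_max_left _ _, fun q hq hqd =>
      absurd (isUnit_of_dvd_unit hqd (my_isUnit_of_deg0 hg (by omega))) hq.not_unit⟩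
  | succ n ih =>
    intro g hg hdeg hXg
    by_cases hu : IsUnit g
    · exact ⟨1, odd_one, le_max_left _ _, fun q hq hqd =>
        absurd (isUnit_of_dvd_unit hqd hu) hq.not_unit⟩
    obtain ⟨q₀, hq₀i, h, rfl⟩ := WfDvdMonoid.exists_irreducible_factor hu hg
    have hq₀ : Prime q₀ := (UniqueFactorizationMonoid.irreducible_iff_prime).mp hq₀i
    have hh0 : h ≠ 0 := by rintro rfl; simp at hg
    have hq₀0 : q₀ ≠ 0 := hq₀.ne_zero
    have hd₀ : 1 ≤ q₀.natDegree := my_natDegree_pos_of_prime hq₀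
    have hmul := Polynomial.natDegree_mul hq₀0 hh0
    have hXh : ¬ (X : Polynomial (ZMod 2)) ∣ h := fun hd => hXg (hd.mul_left q₀)
    have hXq₀ : ¬ (X : Polynomial (ZMod 2)) ∣ q₀ := fun hd => hXg (hd.mul_right h)
    obtain ⟨t, ht_odd, ht_le, ht_dvd⟩ := ih h hh0 (by omega) hXh
    have hq₀dvd : q₀ ∣ X ^ (2 ^ q₀.natDegree - 1) - 1 := prime_dvd_X_pow_sub_one hq₀ hXq₀
    have heven : Even (2 ^ q₀.natDegree) := (Nat.even_pow).mpr ⟨even_two, by omega⟩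
    have ht₀_odd : Odd (2 ^ q₀.natDegree - 1) :=
      Nat.Even.sub_odd Nat.one_le_two_pow heven odd_one
    refine ⟨(2 ^ q₀.natDegree - 1) * t, ht₀_odd.mul ht_odd, ?_, ?_⟩
    · rcases Nat.eq_zero_or_pos h.natDegree with h0 | h0
      · have ht1 : t ≤ 1 := by
          rw [h0] at ht_le; simpa using ht_le
        have : (2 ^ q₀.natDegree - 1) * t ≤ 2 ^ q₀.natDegree - 1 := by
          calc (2 ^ q₀.natDegree - 1) * t ≤ (2 ^ q₀.natDegree - 1) * 1 :=
                Nat.mul_le_mul_left _ ht1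
            _ = 2 ^ q₀.natDegree - 1 := mul_one _
        refine le_trans this (le_trans ?_ (le_max_right _ _))
        have : (q₀ * h).natDegree = q₀.natDegree := by omega
        rw [this]
      · have h2D : 2 ≤ 2 ^ h.natDegree := by
          calc 2 = 2 ^ 1 := by norm_num
            _ ≤ 2 ^ h.natDegree := Nat.pow_le_pow_right (by norm_num) h0
        have hmax : max 1 (2 ^ h.natDegree - 1) = 2 ^ h.natDegree - 1 := by omega
        rw [hmax] at ht_le
        have hb : (2 ^ q₀.natDegree - 1) * t ≤ 2 ^ (q₀.natDegree + h.natDegree) - 1 :=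
          le_trans (Nat.mul_le_mul_left _ ht_le) (mul_pred_le' _ _)
        rw [hmul]
        exact le_trans hb (le_max_right _ _)
    · intro q hq hqd
      rcases hq.2.2 q₀ h hqd with h1 | h1
      · refine (h1.trans hq₀dvd).trans ?_
        have := sub_dvd_pow_sub_pow ((X : Polynomial (ZMod 2)) ^ (2 ^ q₀.natDegree - 1)) 1 t
        rwa [← pow_mul, one_pow] at this
      · refine (ht_dvd q hq h1).trans ?_
        have := sub_dvd_pow_sub_pow ((X : Polynomial (ZMod 2)) ^ t) 1 (2 ^ q₀.natDegree - 1)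
        rwa [← pow_mul, one_pow, mul_comm] at this

theorem stmt_19 (N : ℕ) (hN : 4 ≤ N)
    (σ : (Fin N → ZMod 2) ≃ₗ[ZMod 2] (Fin N → ZMod 2))
    (hσ : Even (orderOf σ)) :
    orderOf σ ≤ 2 * (2 ^ (N - 2) - 1) ∧
      2 * (2 ^ (N - 2) - 1) = 2 ^ (N - 1) - 2 := by
  have heq : 2 * (2 ^ (N - 2) - 1) = 2 ^ (N - 1) - 2 := by
    have h : 2 ^ (N - 1) = 2 * 2 ^ (N - 2) := by
      rw [← pow_succ']; congr 1; omega
    have h1 : 1 ≤ 2 ^ (N - 2) := Nat.one_le_two_pow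
    omega
  refine ⟨?_, heq⟩
  rw [heq]
  -- Setup : finiteness and the endomorphism
  haveI : Finite ((Fin N → ZMod 2) ≃ₗ[ZMod 2] (Fin N → ZMod 2)) :=
    Finite.of_injective
      (fun e => (e : (Fin N → ZMod 2) → (Fin N → ZMod 2))) DFunLike.coe_injective
  set n := orderOf σ with hn_def
  have hn0 : 0 < n := orderOf_pos σ
  set φ : Module.End (ZMod 2) (Fin N → ZMod 2) :=
    LinearEquiv.automorphismGroup.toLinearMapMonoidHom σ with hφ_def
  have hord : orderOf φ = n := by
    rw [hn_def, hφ_def]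
    exact orderOf_injective _ (fun a b h => LinearEquiv.toLinearMap_injective h) σ
  -- the minimal polynomial
  set μ : Polynomial (ZMod 2) := minpoly (ZMod 2) φ with hμ_def
  have hint : IsIntegral (ZMod 2) φ := LinearMap.isIntegral φ
  have hμ0 : μ ≠ 0 := minpoly.ne_zero hint
  have hμdeg : μ.natDegree ≤ N := by
    have h1 := LinearMap.minpoly_dvd_charpoly φ
    have h2 : (LinearMap.charpoly φ).natDegree = N := by
      rw [LinearMap.charpoly_natDegree]
      simp [Module.finrank_pi]
    calc μ.natDegree ≤ (LinearMap.charpoly φ).natDegree :=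
          Polynomial.natDegree_le_of_dvd h1 (LinearMap.charpoly_monic φ).ne_zero
      _ = N := h2
  have hpow_iff : ∀ k : ℕ, μ ∣ X ^ k - 1 ↔ φ ^ k = 1 := by
    intro k
    constructor
    · rintro ⟨c, hc⟩
      have h2 : Polynomial.aeval φ ((X : Polynomial (ZMod 2)) ^ k - 1) = 0 := by
        rw [hc, map_mul, minpoly.aeval (ZMod 2) φ, zero_mul]
      rwa [map_sub, map_pow, Polynomial.aeval_X, map_one, sub_eq_zero] at h2
    · intro h
      apply minpoly.dvd
      rw [map_sub, map_pow, Polynomial.aeval_X, map_one, h, sub_self]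
  have hdvd_n : μ ∣ X ^ n - 1 := (hpow_iff n).mpr (by rw [← hord]; exact pow_orderOf_eq_one φ)
  -- 2-adic decomposition of n
  set a := n.factorization 2 with ha_def
  set m := n / 2 ^ a with hm_def
  have hnm : 2 ^ a * m = n := Nat.ordProj_mul_ordCompl_eq_self n 2
  have hm2 : ¬ 2 ∣ m := Nat.not_dvd_ordCompl Nat.prime_two hn0.ne'
  have ha1 : 1 ≤ a :=
    Nat.Prime.factorization_pos_of_dvd Nat.prime_two hn0.ne' hσ.two_dvd
  have hm0 : 0 < m := by
    rcases Nat.eq_zero_or_pos m with h | h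
    · rw [h, mul_zero] at hnm; omega
    · exact h
  set A := 2 ^ (a - 1) with hA_def
  have hA1 : 1 ≤ A := Nat.one_le_two_pow
  have h2A : 2 ^ a = 2 * A := by
    rw [hA_def, ← pow_succ']; congr 1; omega
  have hn_eq : n = 2 * A * m := by rw [← hnm, h2A]
  -- X does not divide μ
  have hXn : ∀ k : ℕ, 0 < k → ¬ (X : Polynomial (ZMod 2)) ∣ X ^ k - 1 := by
    intro k hk hdvd
    rw [Polynomial.X_dvd_iff] at hdvd
    simp only [Polynomial.coeff_sub, Polynomial.coeff_X_pow, Polynomial.coeff_one,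
      if_neg (by omega : ¬ (0:ℕ) = k)] at hdvd
    simp at hdvd
  have hXμ : ¬ (X : Polynomial (ZMod 2)) ∣ μ := fun h => hXn n hn0 (h.trans hdvd_n)
  -- μ does not divide (X^m - 1)^A
  have hcharpow : ∀ (b e : ℕ), ((X : Polynomial (ZMod 2)) ^ b - 1) ^ (2 ^ e) =
      X ^ (b * 2 ^ e) - 1 := by
    intro b e
    rw [sub_pow_char_pow ((X : Polynomial (ZMod 2)) ^ b) 1, one_pow, ← pow_mul]
  have hXmA : ((X : Polynomial (ZMod 2)) ^ m - 1) ^ A = X ^ (m * A) - 1 := by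
    rw [hA_def]; exact hcharpow m (a - 1)
  have hmA_lt : m * A < n := by
    have : n = 2 * (m * A) := by rw [hn_eq]; ring
    omega
  have hmA_pos : 0 < m * A := Nat.mul_pos hm0 hA1
  have hnotdvd : ¬ μ ∣ ((X : Polynomial (ZMod 2)) ^ m - 1) ^ A := by
    intro h
    rw [hXmA] at h
    have h1 := orderOf_dvd_of_pow_eq_one ((hpow_iff (m * A)).mp h)
    rw [hord] at h1
    have := Nat.le_of_dvd hmA_pos h1
    omega
  -- squarefreeness of X^m - 1
  have hm_ne : ((m : ZMod 2)) ≠ 0 := by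
    simpa [ZMod.natCast_eq_zero_iff] using hm2
  have hsep : ((X : Polynomial (ZMod 2)) ^ m - C 1).Separable :=
    Polynomial.separable_X_pow_sub_C 1 hm_ne one_ne_zero
  have hsq : Squarefree ((X : Polynomial (ZMod 2)) ^ m - 1) := by
    have := hsep.squarefree
    rwa [map_one] at this
  -- all prime factors of μ divide X^m - 1
  have hXn_eq : (X : Polynomial (ZMod 2)) ^ n - 1 = (X ^ m - 1) ^ (2 ^ a) := by
    rw [hcharpow m a]; congr 1; rw [← hnm]; ring
  have hprimes : ∀ q : Polynomial (ZMod 2), Prime q → q ∣ μ → q ∣ X ^ m - 1 := by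
    intro q hq hqd
    apply hq.dvd_of_dvd_pow (n := 2 ^ a)
    rw [← hXn_eq]
    exact hqd.trans hdvd_n
  -- extract a prime with multiplicity at least A + 1
  obtain ⟨p, hp, hpdvd⟩ : ∃ p : Polynomial (ZMod 2), Prime p ∧ p ^ (A + 1) ∣ μ := by
    by_contra hcon
    push_neg at hcon
    exact hnotdvd (my_dvd_pow_of_squarefree A μ.natDegree μ _ hμ0 le_rfl hsq hprimes
      (fun q hq => hcon q hq))
  obtain ⟨g, hμeq⟩ := hpdvd
  have hg0 : g ≠ 0 := by rintro rfl; rw [mul_zero] at hμeq; exact hμ0 hμeq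
  have hdp : 1 ≤ p.natDegree := my_natDegree_pos_of_prime hp
  have hpμ : p ^ (A + 1) ∣ μ := ⟨g, hμeq⟩
  have hXg : ¬ (X : Polynomial (ZMod 2)) ∣ g := fun h =>
    hXμ (h.trans ⟨p ^ (A + 1), by rw [hμeq]; ring⟩)
  have hXp : ¬ (X : Polynomial (ZMod 2)) ∣ p := fun h =>
    hXμ (h.trans ((dvd_pow_self p (Nat.succ_ne_zero A)).trans hpμ))
  have hdegs : (A + 1) * p.natDegree + g.natDegree = μ.natDegree := by
    rw [hμeq, Polynomial.natDegree_mul (pow_ne_zero _ hp.ne_zero) hg0,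
      Polynomial.natDegree_pow]
  obtain ⟨t₂, ht₂odd, ht₂le, ht₂⟩ := exists_odd_exponent g.natDegree g hg0 le_rfl hXg
  -- main divisibility machine
  have main : ∀ t₁ : ℕ, Odd t₁ → p ∣ X ^ t₁ - 1 → m ≤ t₁ * t₂ := by
    intro t₁ ht₁odd hpt₁
    have ht₁0 : 0 < t₁ := ht₁odd.pos
    have ht₂0 : 0 < t₂ := ht₂odd.pos
    have hdvd_all : ∀ q : Polynomial (ZMod 2), Prime q → q ∣ μ → q ∣ X ^ (t₁ * t₂) - 1 := by
      intro q hq hqd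
      rw [hμeq] at hqd
      rcases hq.2.2 _ _ hqd with h1 | h1
      · have h3 : q ∣ X ^ t₁ - 1 := (hq.dvd_of_dvd_pow h1).trans hpt₁
        refine h3.trans ?_
        have := sub_dvd_pow_sub_pow ((X : Polynomial (ZMod 2)) ^ t₁) 1 t₂
        rwa [← pow_mul, one_pow] at this
      · have h3 : q ∣ X ^ t₂ - 1 := ht₂ q hq h1
        refine h3.trans ?_
        have := sub_dvd_pow_sub_pow ((X : Polynomial (ZMod 2)) ^ t₂) 1 t₁
        rwa [← pow_mul, one_pow, mul_comm] at this
    have hXt0 : ((X : Polynomial (ZMod 2)) ^ (t₁ * t₂) - 1) ≠ 0 := by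
      intro h
      have := hXn (t₁ * t₂) (Nat.mul_pos ht₁0 ht₂0)
      rw [h] at this
      exact this (dvd_zero _)
    have hdvdpow : μ ∣ ((X : Polynomial (ZMod 2)) ^ (t₁ * t₂) - 1) ^ (2 ^ N) :=
      my_dvd_pow_of_prime_dvd _ (2 ^ N) μ hμ0
        (le_trans hμdeg (le_of_lt (Nat.lt_two_pow_self (n := N)))) hdvd_all
    have hdvd2 : μ ∣ X ^ (t₁ * t₂ * 2 ^ N) - 1 := by
      rwa [hcharpow (t₁ * t₂) N] at hdvdpow
    have h1 : n ∣ t₁ * t₂ * 2 ^ N := by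
      rw [← hord]
      exact orderOf_dvd_of_pow_eq_one ((hpow_iff _).mp hdvd2)
    have h2 : m ∣ t₁ * t₂ * 2 ^ N := (Dvd.intro_left (2 ^ a) hnm).trans h1
    have h3 : Nat.Coprime m (2 ^ N) :=
      Nat.Coprime.pow_right N ((Nat.prime_two.coprime_iff_not_dvd.mpr hm2).symm)
    have h4 : m ∣ t₁ * t₂ := h3.dvd_of_dvd_mul_right h2
    exact Nat.le_of_dvd (Nat.mul_pos ht₁0 ht₂0) h4
  -- final case split
  by_cases hdp1 : p.natDegree = 1
  · -- p = X + 1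
    have hzmod : ∀ x : ZMod 2, x ≠ 0 → x = 1 := by decide
    have hp_eq : p = X + 1 := by
      have h1 := Polynomial.eq_X_add_C_of_natDegree_le_one (le_of_eq hdp1)
      have hc1 : p.coeff 1 ≠ 0 := by
        have := Polynomial.leadingCoeff_ne_zero.mpr hp.ne_zero
        rwa [Polynomial.leadingCoeff, hdp1] at this
      have hc0 : p.coeff 0 ≠ 0 := fun h => hXp (Polynomial.X_dvd_iff.mpr h)
      rw [hzmod _ hc1, hzmod _ hc0, map_one, one_mul] at h1
      exact h1
    have hXsub : (X - 1 : Polynomial (ZMod 2)) = X + 1 := by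
      have h2 : (2 : Polynomial (ZMod 2)) = 0 := by
        rw [← map_ofNat (Polynomial.C : ZMod 2 →+* Polynomial (ZMod 2)) 2,
          show (2 : ZMod 2) = 0 by decide, map_zero]
      linear_combination -h2
    have hpt : p ∣ X ^ 1 - 1 := by
      rw [pow_one, hXsub, hp_eq]
    have hm_le : m ≤ t₂ := by simpa using main 1 odd_one hpt
    rw [hn_eq]
    refine arith1' hA1 hN ?_ (le_trans hm_le ht₂le)
    have hd1 : (A + 1) * p.natDegree = A + 1 := by rw [hdp1, mul_one]
    omega
  · have hdp2 : 2 ≤ p.natDegree := by omega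
    have hpt := prime_dvd_X_pow_sub_one hp hXp
    have hoddt : Odd (2 ^ p.natDegree - 1) :=
      Nat.Even.sub_odd Nat.one_le_two_pow ((Nat.even_pow).mpr ⟨even_two, by omega⟩) odd_one
    have hm_le := main _ hoddt hpt
    have hb : (2 ^ p.natDegree - 1) * t₂ ≤ 2 ^ (p.natDegree + g.natDegree) - 1 := by
      rcases Nat.eq_zero_or_pos g.natDegree with h0 | h0
      · have ht1 : t₂ ≤ 1 := by rw [h0] at ht₂le; simpa using ht₂le
        have h2 : 1 ≤ 2 ^ p.natDegree := Nat.one_le_two_pow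
        have h3 : 2 ^ p.natDegree ≤ 2 ^ (p.natDegree + g.natDegree) :=
          Nat.pow_le_pow_right (by norm_num) (by omega)
        calc (2 ^ p.natDegree - 1) * t₂ ≤ (2 ^ p.natDegree - 1) * 1 :=
              Nat.mul_le_mul_left _ ht1
          _ = 2 ^ p.natDegree - 1 := mul_one _
          _ ≤ 2 ^ (p.natDegree + g.natDegree) - 1 := by omega
      · have h2D : 2 ≤ 2 ^ g.natDegree := by
          calc 2 = 2 ^ 1 := by norm_num
            _ ≤ 2 ^ g.natDegree := Nat.pow_le_pow_right (by norm_num) h0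
        have hmax : max 1 (2 ^ g.natDegree - 1) = 2 ^ g.natDegree - 1 := by omega
        rw [hmax] at ht₂le
        exact le_trans (Nat.mul_le_mul_left _ ht₂le) (mul_pred_le' _ _)
    rw [hn_eq]
    exact arith2' hA1 hdp2 (by omega) (le_trans hm_le hb)
end
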